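/- Let X be a continuous flow on a compact metric space M with time-t maps f_t, φ : M → ℝ continuous, and x ∈ M. If for all y ∈ ω(x) one has limsup_{n→∞} (1/n) ∫_0^n φ(f_t(y)) dt ≤ liminf_{n→∞} (1/n) ∫_0^n φ(f_t(x)) dt, then the limit lim_{T→∞} (1/T) ∫_0^T φ(f_t(x)) dt exists. -/

import Mathlib

open Filter intervalIntegral

set_option maxHeartbeats 1000000

/-- ω-limit set of a point under a flow. -/
def omegaFlow {M : Type*} [TopologicalSpace M] (X : ℝ → M → M) (x : M) : Set M :=
  {y | ∃ s : ℕ → ℝ, Tendsto s atTop atTop ∧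
    Tendsto (fun k => X (s k) x) atTop (nhds y)}

/-- Theorem B: criterion for the existence of the Birkhoff limit for a continuous
observable along a continuous flow on a compact metric space. -/
theorem flow_birkhoff_limit {M : Type*} [MetricSpace M] [CompactSpace M]
    (X : ℝ → M → M) (hcont : Continuous fun p : ℝ × M => X p.1 p.2)
    (hX0 : ∀ y, X 0 y = y) (hXadd : ∀ s t y, X (s + t) y = X s (X t y))
    (φ : M → ℝ) (hφ : Continuous φ) (x : M)
    (h : ∀ y ∈ omegaFlow X x,
      limsup (fun n : ℕ => (1 / (n : ℝ)) * ∫ t in (0:ℝ)..(n : ℝ), φ (X t y)) atTop ≤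
        liminf (fun n : ℕ => (1 / (n : ℝ)) * ∫ t in (0:ℝ)..(n : ℝ), φ (X t x)) atTop) :
    ∃ L : ℝ, Tendsto (fun T : ℝ => (1 / T) * ∫ t in (0:ℝ)..T, φ (X t x))
      atTop (nhds L) := by
  classical
  -- a bound on φ
  obtain ⟨C, hC⟩ : ∃ C : ℝ, ∀ z : M, |φ z| ≤ C := by
    obtain ⟨C, hC⟩ := isCompact_univ.exists_bound_of_continuousOn hφ.continuousOn
    exact ⟨C, fun z => by simpa [Real.norm_eq_abs] using hC z (Set.mem_univ z)⟩
  have hC0 : 0 ≤ C := le_trans (abs_nonneg _) (hC x)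
  have horb : ∀ y : M, Continuous fun t : ℝ => φ (X t y) := fun y =>
    hφ.comp (hcont.comp (continuous_id.prodMk continuous_const))
  have hInt : ∀ (y : M) (a b : ℝ),
      IntervalIntegrable (fun t => φ (X t y)) MeasureTheory.volume a b :=
    fun y a b => (horb y).intervalIntegrable a b
  have hbound : ∀ (y : M) (a b : ℝ), |∫ t in a..b, φ (X t y)| ≤ C * |b - a| := by
    intro y a b
    simpa [Real.norm_eq_abs] using
      intervalIntegral.norm_integral_le_of_norm_le_const
        (C := C) (f := fun t => φ (X t y))
        (fun t _ => by simpa [Real.norm_eq_abs] using hC (X t y))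
  have hshift : ∀ (s b : ℝ),
      (∫ t in (0:ℝ)..b, φ (X t (X s x))) = ∫ t in s..(s+b), φ (X t x) := by
    intro s b
    have h2 : ∀ t : ℝ, φ (X t (X s x)) = φ (X (t + s) x) := fun t => by
      rw [← hXadd t s x]
    simp_rw [h2]
    rw [intervalIntegral.integral_comp_add_right (fun t => φ (X t x)) s, zero_add,
      add_comm b s]
  have hadd : ∀ s b : ℝ, (∫ t in (0:ℝ)..s, φ (X t x)) + (∫ t in s..b, φ (X t x)) =
      ∫ t in (0:ℝ)..b, φ (X t x) :=
    fun s b => intervalIntegral.integral_add_adjacent_intervals (hInt x 0 s) (hInt x s b)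
  have habs : ∀ (y : M) (n : ℕ), |(1/(n:ℝ)) * ∫ t in (0:ℝ)..(n:ℝ), φ (X t y)| ≤ C := by
    intro y n
    rcases Nat.eq_zero_or_pos n with rfl | hn
    · simpa using hC0
    · have hn' : (0:ℝ) < n := by exact_mod_cast hn
      have h1 := hbound y 0 n
      rw [sub_zero, abs_of_nonneg hn'.le] at h1
      rw [abs_mul, abs_of_nonneg (by positivity : (0:ℝ) ≤ 1/(n:ℝ))]
      calc (1/(n:ℝ)) * |∫ t in (0:ℝ)..(n:ℝ), φ (X t y)|
          ≤ (1/(n:ℝ)) * (C * n) := by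
            exact mul_le_mul_of_nonneg_left h1 (by positivity)
        _ = C := by field_simp
  -- the closed ω-limit core K
  set Q : ℕ → Set M := fun m => closure ((fun t : ℝ => X t x) '' Set.Ici (m:ℝ)) with hQ
  have hQclosed : ∀ m, IsClosed (Q m) := fun m => isClosed_closure
  have hQmono : ∀ m, Q (m+1) ⊆ Q m := fun m =>
    closure_mono (Set.image_mono (Set.Ici_subset_Ici.mpr (by push_cast; linarith)))
  set K : Set M := ⋂ m, Q m with hK
  have hKS : K ⊆ omegaFlow X x := by
    intro y hy
    have hy' : ∀ m : ℕ, ∃ t : ℝ, (m:ℝ) ≤ t ∧ dist y (X t x) < 1/((m:ℝ)+1) := by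
      intro m
      have hm := Set.mem_iInter.mp hy m
      rcases Metric.mem_closure_iff.mp hm (1/((m:ℝ)+1)) (by positivity) with ⟨z, hz, hdz⟩
      rcases hz with ⟨t, ht, rfl⟩
      exact ⟨t, ht, hdz⟩
    choose s hs1 hs2 using hy'
    refine ⟨s, tendsto_atTop_mono hs1 tendsto_natCast_atTop_atTop, ?_⟩
    have hdist : Tendsto (fun m => dist (X (s m) x) y) atTop (nhds 0) := by
      apply squeeze_zero (fun m => dist_nonneg) (fun m => ?_)
        tendsto_one_div_add_atTop_nhds_zero_nat
      rw [dist_comm]; exact (hs2 m).le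
    exact tendsto_iff_dist_tendsto_zero.mpr hdist
  have hattr : ∀ U : Set M, IsOpen U → K ⊆ U →
      ∃ m : ℕ, ∀ t : ℝ, (m:ℝ) ≤ t → X t x ∈ U := by
    intro U hU hKU
    by_contra hcon
    push_neg at hcon
    have hne : ∀ m : ℕ, (Q m ∩ Uᶜ).Nonempty := by
      intro m
      obtain ⟨t, ht, htU⟩ := hcon m
      exact ⟨X t x, subset_closure ⟨t, ht, rfl⟩, htU⟩
    obtain ⟨y, hy⟩ := IsCompact.nonempty_iInter_of_sequence_nonempty_isCompact_isClosed
      (fun m => Q m ∩ Uᶜ)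
      (fun m => Set.inter_subset_inter_left _ (hQmono m)) hne
      ((IsClosed.inter (hQclosed 0) hU.isClosed_compl).isCompact)
      (fun m => (hQclosed m).inter hU.isClosed_compl)
    have hyK : y ∈ K := Set.mem_iInter.mpr fun m => (Set.mem_iInter.mp hy m).1
    exact (Set.mem_iInter.mp hy 0).2 (hKU hyK)
  have hKcompact : IsCompact K := (isClosed_iInter hQclosed).isCompact
  -- the averages along x and the candidate limit
  set a : ℕ → ℝ := fun n : ℕ => (1 / (n : ℝ)) * ∫ t in (0:ℝ)..(n : ℝ), φ (X t x) with ha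
  set L : ℝ := liminf a atTop with hL
  have hcb : IsBoundedUnder (· ≤ ·) atTop a :=
    isBoundedUnder_of ⟨C, fun n => (abs_le.mp (habs x n)).2⟩
  have hcb' : IsBoundedUnder (· ≥ ·) atTop a :=
    isBoundedUnder_of ⟨-C, fun n => (abs_le.mp (habs x n)).1⟩
  have hLup : L ≤ C := by
    rw [hL]
    exact liminf_le_of_frequently_le
      (Frequently.of_forall fun n => (abs_le.mp (habs x n)).2) hcb'
  have hLlo : -C ≤ L := by
    rw [hL]
    exact le_liminf_of_le hcb.isCoboundedUnder_ge
      (Eventually.of_forall fun n => (abs_le.mp (habs x n)).1)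
  refine ⟨L, ?_⟩
  rw [Metric.tendsto_nhds]
  intro ε hε
  set c : ℝ := L + ε/4 with hc
  -- pointwise good times on the ω-limit set
  have hpt : ∀ y, y ∈ omegaFlow X x →
      ∃ n : ℕ, 1 ≤ n ∧ (∫ t in (0:ℝ)..(n:ℝ), φ (X t y)) < c * n := by
    intro y hy
    have h1 : limsup (fun n : ℕ => (1 / (n : ℝ)) * ∫ t in (0:ℝ)..(n : ℝ), φ (X t y))
        atTop < c := lt_of_le_of_lt (h y hy) (by rw [hc]; linarith)
    have h2 := eventually_lt_of_limsup_lt h1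
      (isBoundedUnder_of ⟨C, fun n => (abs_le.mp (habs y n)).2⟩)
    obtain ⟨n0, hn0⟩ := eventually_atTop.mp h2
    refine ⟨max n0 1, le_max_right _ _, ?_⟩
    have h3 := hn0 _ (le_max_left n0 1)
    have hnpos : (0:ℝ) < ((max n0 1 : ℕ) : ℝ) := by
      have : 0 < max n0 1 := lt_of_lt_of_le Nat.zero_lt_one (le_max_right n0 1)
      exact_mod_cast this
    rw [one_div_mul_eq_div] at h3
    exact (div_lt_iff₀ hnpos).mp h3
  choose nn hnn1 hnn2 using hpt
  -- the cover of K
  set V : K → Set M := fun i =>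
    {z : M | (∫ t in (0:ℝ)..((nn i (hKS i.2)) : ℝ), φ (X t z)) < c * (nn i (hKS i.2))}
    with hV
  have hVcont : Continuous (Function.uncurry fun (z : M) (t : ℝ) => φ (X t z)) :=
    hφ.comp (hcont.comp (continuous_snd.prodMk continuous_fst))
  have hVopen : ∀ i, IsOpen (V i) := by
    intro i
    have hcont' : Continuous fun z : M =>
        ∫ t in (0:ℝ)..((nn i (hKS i.2)):ℝ), φ (X t z) :=
      intervalIntegral.continuous_parametric_intervalIntegral_of_continuous'
        (f := fun (z : M) (t : ℝ) => φ (X t z)) hVcont 0 _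
    exact isOpen_lt hcont' continuous_const
  have hKcover : K ⊆ ⋃ i : K, V i := fun z hz =>
    Set.mem_iUnion.mpr ⟨⟨z, hz⟩, hnn2 z (hKS hz)⟩
  obtain ⟨I, hI⟩ := hKcompact.elim_finite_subcover V hVopen hKcover
  set U : Set M := ⋃ i ∈ I, V i with hU
  have hUopen : IsOpen U := isOpen_biUnion fun i _ => hVopen i
  set N : ℕ := I.sup (fun i => nn i (hKS i.2)) with hN
  have hUkey : ∀ z ∈ U, ∃ n : ℕ, 1 ≤ n ∧ n ≤ N ∧
      (∫ t in (0:ℝ)..(n:ℝ), φ (X t z)) < c * n := by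
    intro z hz
    rcases Set.mem_iUnion₂.mp hz with ⟨i, hiI, hiV⟩
    exact ⟨nn i (hKS i.2), hnn1 _ _, by rw [hN]; exact Finset.le_sup (f := fun i : K => nn i (hKS i.2)) hiI, hiV⟩
  obtain ⟨m0, hm0⟩ := hattr U hUopen hI
  have hN0 : (0:ℝ) ≤ (N:ℝ) := Nat.cast_nonneg N
  -- the greedy decomposition estimate
  have key : ∀ k : ℕ, ∀ T1 T2 : ℝ, (m0:ℝ) ≤ T1 → T1 ≤ T2 → T2 ≤ T1 + k →
      (∫ t in T1..T2, φ (X t x)) ≤ c * (T2 - T1) + (C + |c|) * N := by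
    intro k
    induction k with
    | zero =>
      intro T1 T2 h1 h2 h3
      have hT : T2 = T1 := by push_cast at h3; linarith
      rw [hT, intervalIntegral.integral_same]
      have h4 : 0 ≤ (C + |c|) * (N:ℝ) :=
        mul_nonneg (add_nonneg hC0 (abs_nonneg c)) hN0
      linarith
    | succ k ih =>
      intro T1 T2 h1 h2 h3
      by_cases hcase : T2 ≤ T1 + N
      · have hb := hbound x T1 T2
        rw [abs_of_nonneg (by linarith : (0:ℝ) ≤ T2 - T1)] at hb
        have h5 : (∫ t in T1..T2, φ (X t x)) ≤ C * (T2 - T1) := (le_abs_self _).trans hb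
        have hint1 : 0 ≤ (C + |c|) * ((N:ℝ) - (T2 - T1)) :=
          mul_nonneg (add_nonneg hC0 (abs_nonneg c)) (by linarith)
        have hint2 : 0 ≤ (|c| + c) * (T2 - T1) :=
          mul_nonneg (by linarith [neg_abs_le c]) (by linarith)
        nlinarith [h5, hint1, hint2]
      · push_neg at hcase
        obtain ⟨n, hn1, hnN, hint⟩ := hUkey (X T1 x) (hm0 T1 h1)
        have hblock : (∫ t in T1..(T1 + n), φ (X t x)) < c * n := by
          rw [← hshift T1 n]; exact hint
        have hn1' : (1:ℝ) ≤ (n:ℝ) := by exact_mod_cast hn1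
        have hnN' : (n:ℝ) ≤ (N:ℝ) := by exact_mod_cast hnN
        have hrest := ih (T1 + n) T2 (by linarith) (by linarith)
          (by push_cast at h3 ⊢; linarith)
        have hsplit : (∫ t in T1..(T1+(n:ℝ)), φ (X t x)) +
            (∫ t in (T1+(n:ℝ))..T2, φ (X t x)) = ∫ t in T1..T2, φ (X t x) :=
          intervalIntegral.integral_add_adjacent_intervals
            (hInt x T1 (T1+n)) (hInt x (T1+n) T2)
        rw [← hsplit]
        nlinarith [hblock, hrest]
  -- the eventual upper bound
  have upper : ∀ᶠ T in atTop, 1/T * (∫ t in (0:ℝ)..T, φ (X t x)) ≤ L + ε/2 := by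
    set D : ℝ := |∫ t in (0:ℝ)..(m0:ℝ), φ (X t x)| + |c| * m0 + (C + |c|) * N with hD
    have hD0 : 0 ≤ D := by positivity
    filter_upwards [eventually_ge_atTop (1:ℝ), eventually_ge_atTop (m0:ℝ),
      eventually_ge_atTop (4*D/ε)] with T hT1 hTm hTD
    have hTpos : (0:ℝ) < T := by linarith
    have hkey := key (⌈T - (m0:ℝ)⌉₊) (m0:ℝ) T le_rfl hTm
      (by linarith [Nat.le_ceil (T - (m0:ℝ))])
    have hFT : (∫ t in (0:ℝ)..T, φ (X t x)) =
        (∫ t in (0:ℝ)..(m0:ℝ), φ (X t x)) + ∫ t in (m0:ℝ)..T, φ (X t x) :=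
      (hadd _ _).symm
    have h6 : (∫ t in (0:ℝ)..T, φ (X t x)) ≤ c * T + D := by
      rw [hFT]
      have h7 : (∫ t in (0:ℝ)..(m0:ℝ), φ (X t x)) ≤
          |∫ t in (0:ℝ)..(m0:ℝ), φ (X t x)| := le_abs_self _
      have h8 : 0 ≤ (|c| + c) * (m0:ℝ) :=
        mul_nonneg (by linarith [neg_abs_le c]) (Nat.cast_nonneg m0)
      nlinarith [hkey, h7, h8]
    have hstep : 1/T * (∫ t in (0:ℝ)..T, φ (X t x)) ≤ 1/T * (c * T + D) :=
      mul_le_mul_of_nonneg_left h6 (by positivity)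
    have heq : 1/T * (c * T + D) = c + D/T := by
      field_simp
    have hDT : D/T ≤ ε/4 := by
      rw [div_le_iff₀ hTpos]
      have h9 : 4*D ≤ T * ε := (div_le_iff₀ hε).mp hTD
      linarith
    rw [heq] at hstep
    calc 1/T * (∫ t in (0:ℝ)..T, φ (X t x)) ≤ c + D/T := hstep
      _ ≤ L + ε/2 := by rw [hc]; linarith
  -- the eventual lower bound
  have hfreq : ∀ᶠ n : ℕ in atTop, L - ε/4 < a n := by
    apply eventually_lt_of_lt_liminf _ hcb'
    rw [← hL]; linarith
  obtain ⟨n1, hn1⟩ := eventually_atTop.mp hfreq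
  have lower : ∀ᶠ T in atTop, L - ε/2 ≤ 1/T * (∫ t in (0:ℝ)..T, φ (X t x)) := by
    filter_upwards [eventually_ge_atTop (1:ℝ), eventually_ge_atTop ((n1:ℝ)+1),
      eventually_ge_atTop (16*C/ε)] with T hT1 hTn1 hTC
    have hTpos : (0:ℝ) < T := by linarith
    set n : ℕ := ⌊T⌋₊ with hnfl
    have hnT : (n:ℝ) ≤ T := Nat.floor_le (by linarith)
    have hTn : T < (n:ℝ) + 1 := Nat.lt_floor_add_one T
    have hnn1' : n1 ≤ n := Nat.le_floor (by linarith)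
    have hmpos : (1:ℝ) ≤ (n:ℝ) := by
      have h1n : 1 ≤ n := Nat.le_floor (by push_cast; linarith)
      exact_mod_cast h1n
    have hna := hn1 n hnn1'
    have hG := hbound x 0 (n:ℝ)
    rw [sub_zero, show |(n:ℝ)| = (n:ℝ) from abs_of_nonneg (by linarith)] at hG
    have hE := hbound x (n:ℝ) T
    rw [abs_of_nonneg (by linarith : (0:ℝ) ≤ T - (n:ℝ))] at hE
    have hsplit : (∫ t in (0:ℝ)..T, φ (X t x)) =
        (∫ t in (0:ℝ)..(n:ℝ), φ (X t x)) + ∫ t in (n:ℝ)..T, φ (X t x) :=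
      (hadd _ _).symm
    have hGlb : (L - ε/4) * n ≤ ∫ t in (0:ℝ)..(n:ℝ), φ (X t x) := by
      simp only [ha] at hna
      rw [one_div_mul_eq_div] at hna
      exact le_of_lt ((lt_div_iff₀ (by linarith)).mp hna)
    rw [hsplit, one_div, ← div_eq_inv_mul, le_div_iff₀ hTpos]
    have hint1 : 0 ≤ (C - L) * (T - (n:ℝ)) :=
      mul_nonneg (by linarith) (by linarith)
    have hint2 : C * (T - (n:ℝ)) ≤ C := by
      nlinarith
    have hint3 : 0 ≤ ε * (T - (n:ℝ)) := mul_nonneg hε.le (by linarith)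
    have hEl : -(C * (T - (n:ℝ))) ≤ ∫ t in (n:ℝ)..T, φ (X t x) :=
      (abs_le.mp hE).1
    have h16 : 16*C ≤ T * ε := (div_le_iff₀ hε).mp hTC
    nlinarith [hGlb, hEl, hint1, hint2, hint3, h16]
  -- conclusion
  filter_upwards [upper, lower] with T hu hl
  rw [Real.dist_eq, abs_sub_lt_iff]
  exact ⟨by linarith, by linarith⟩
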